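/- Let μ_n be a rotation-invariant probability measure on ℂ with finite moments M(2ℓ) = ∫|z|^{2ℓ} dμ_n, and consider the n-point determinantal process with kernel K_n(z, w̄) = Σ_{ℓ=0}^{n-1} c_ℓ (z w̄)^ℓ, c_ℓ = M(2ℓ)^{-1}, with joint density (1/Z_n) ∏_{j<k} |z_j − z_k|² with respect to μ_n^⊗n, Z_n = n! ∏_{ℓ=0}^{n-1} M(2ℓ). Then for partitions λ, π with at most n parts, E[s_λ(z₁,...,z_n) conj(s_π(z₁,...,z_n))] = δ_{λπ} ∏_{ℓ=0}^{n-1} M(2(n + λ_ℓ − ℓ − 1)) / M(2(n − ℓ − 1)). -/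

import Mathlib

open MeasureTheory Finset

lemma intPQ (μ : Measure ℂ)
    (hmom : ∀ k : ℕ, Integrable (fun z => ‖z‖ ^ k) μ) (p q : ℕ) :
    Integrable (fun z : ℂ => z ^ p * (starRingEnd ℂ z) ^ q) μ := by
  refine (hmom (p + q)).mono' ?_ (Filter.Eventually.of_forall fun z => ?_)
  · exact Continuous.aestronglyMeasurable ((continuous_pow p).mul (Complex.continuous_conj.pow q))
  · simp [norm_mul, norm_pow, pow_add, Complex.norm_conj]

lemma mom_eq (μ : Measure ℂ)
    (hrot : ∀ θ : ℝ, Measure.map (fun z => Complex.exp (θ * Complex.I) * z) μ = μ)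
    (hmom : ∀ k : ℕ, Integrable (fun z => ‖z‖ ^ k) μ) (p q : ℕ) :
    ∫ z, z ^ p * (starRingEnd ℂ z) ^ q ∂μ
      = if p = q then ((∫ z, ‖z‖ ^ (2 * p) ∂μ : ℝ) : ℂ) else 0 := by
  rcases eq_or_ne p q with h | h
  · subst h
    rw [if_pos rfl]
    rw [show (fun z : ℂ => z ^ p * (starRingEnd ℂ z) ^ p)
        = fun z : ℂ => ((‖z‖ ^ (2 * p) : ℝ) : ℂ) from funext fun z => ?_]
    · exact integral_ofReal (𝕜 := ℂ)
    rw [← mul_pow, Complex.mul_conj]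
    push_cast [Complex.normSq_eq_norm_sq, ← pow_mul]
    ring_nf
  · rw [if_neg h]
    set d : ℝ := (p : ℝ) - (q : ℝ) with hd
    have hd0 : d ≠ 0 := sub_ne_zero.2 (by exact_mod_cast fun hh => h (by exact_mod_cast hh))
    set θ : ℝ := Real.pi / d with hθ
    have hT : Measurable fun z : ℂ => Complex.exp (θ * Complex.I) * z :=
      measurable_id.const_mul _
    have key : ∀ z : ℂ,
        (Complex.exp (θ * Complex.I) * z) ^ p
          * (starRingEnd ℂ (Complex.exp (θ * Complex.I) * z)) ^ q
        = -(z ^ p * (starRingEnd ℂ z) ^ q) := by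
      intro z
      have hconj : starRingEnd ℂ (Complex.exp (θ * Complex.I))
          = Complex.exp (-(θ * Complex.I)) := by
        rw [← Complex.exp_conj]
        congr 1
        simp [Complex.conj_ofReal]
      have hfac : Complex.exp (θ * Complex.I) ^ p * Complex.exp (-(θ * Complex.I)) ^ q = -1 := by
        rw [← Complex.exp_nat_mul, ← Complex.exp_nat_mul, ← Complex.exp_add]
        have h1 : (p : ℂ) * (θ * Complex.I) + (q : ℂ) * -(θ * Complex.I)
            = ((d * θ : ℝ) : ℂ) * Complex.I := by push_cast [hd]; ring
        have h2 : d * θ = Real.pi := by rw [hθ]; field_simp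
        rw [h1, h2, Complex.exp_pi_mul_I]
      calc (Complex.exp (θ * Complex.I) * z) ^ p
            * (starRingEnd ℂ (Complex.exp (θ * Complex.I) * z)) ^ q
          = (Complex.exp (θ * Complex.I) ^ p * Complex.exp (-(θ * Complex.I)) ^ q)
              * (z ^ p * (starRingEnd ℂ z) ^ q) := by
            rw [map_mul, hconj]; ring
        _ = -(z ^ p * (starRingEnd ℂ z) ^ q) := by rw [hfac]; ring
    have heq : ∫ z, z ^ p * (starRingEnd ℂ z) ^ q ∂μ
        = -∫ z, z ^ p * (starRingEnd ℂ z) ^ q ∂μ := by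
      conv_lhs => rw [← hrot θ]
      rw [integral_map hT.aemeasurable (Continuous.aestronglyMeasurable (f := fun z : ℂ => z ^ p * (starRingEnd ℂ z) ^ q)
        ((continuous_pow p).mul (Complex.continuous_conj.pow q)))]
      simp only [key]
      rw [integral_neg]
    linear_combination heq / 2

lemma prod_integral (n : ℕ) (μ : Measure ℂ) [IsProbabilityMeasure μ]
    (f : Fin n → ℂ → ℂ) (hf : ∀ i, Integrable (f i) μ) :
    ∫ z : Fin n → ℂ, ∏ i, f i (z i) ∂(Measure.pi fun _ => μ) = ∏ i, ∫ z, f i z ∂μ := by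
  letI : MeasureSpace ℂ := ⟨μ⟩
  exact MeasureTheory.integral_fin_nat_prod_eq_prod f

lemma prod_integrable (n : ℕ) (μ : Measure ℂ) [IsProbabilityMeasure μ]
    (f : Fin n → ℂ → ℂ) (hf : ∀ i, Integrable (f i) μ) :
    Integrable (fun z : Fin n → ℂ => ∏ i, f i (z i)) (Measure.pi fun _ => μ) := by
  letI : MeasureSpace ℂ := ⟨μ⟩
  exact Integrable.fin_nat_prod hf

lemma prodAbs (n : ℕ) (z : Fin n → ℂ) :
    ∏ p ∈ Finset.univ.filter (fun p : Fin n × Fin n => p.1 < p.2),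
        (((‖z p.1 - z p.2‖ : ℝ) : ℂ)) ^ 2
      = Matrix.det (Matrix.of fun k ℓ : Fin n => z k ^ (n - 1 - (ℓ : ℕ)))
        * starRingEnd ℂ (Matrix.det (Matrix.of fun k ℓ : Fin n => z k ^ (n - 1 - (ℓ : ℕ)))) := by
  have hVM : (Matrix.of fun k ℓ : Fin n => z k ^ (n - 1 - (ℓ : ℕ)))
      = (Matrix.vandermonde z).submatrix id (Fin.revPerm : Equiv.Perm (Fin n)) := by
    ext k ℓ
    simp only [Matrix.of_apply, Matrix.submatrix_apply, Matrix.vandermonde_apply, id_eq,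
      Fin.revPerm_apply, Fin.val_rev]
    congr 1
    omega
  have hdet : Matrix.det (Matrix.of fun k ℓ : Fin n => z k ^ (n - 1 - (ℓ : ℕ)))
      = ((Equiv.Perm.sign (Fin.revPerm : Equiv.Perm (Fin n)) : ℤ) : ℂ)
        * ∏ i : Fin n, ∏ j ∈ Ioi i, (z j - z i) := by
    rw [hVM, Matrix.det_permute', Matrix.det_vandermonde]
  set ε : ℂ := ((Equiv.Perm.sign (Fin.revPerm : Equiv.Perm (Fin n)) : ℤ) : ℂ) with hε
  set P : ℂ := ∏ i : Fin n, ∏ j ∈ Ioi i, (z j - z i) with hP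
  have hsign : ε * starRingEnd ℂ ε = 1 := by
    rcases Int.units_eq_one_or (Equiv.Perm.sign (Fin.revPerm : Equiv.Perm (Fin n))) with hs | hs <;>
      simp [hε, hs]
  have hrhs : ∀ i : Fin n, (∏ j ∈ Ioi i, (z j - z i))
      * starRingEnd ℂ (∏ j ∈ Ioi i, (z j - z i))
      = ∏ j ∈ Ioi i, (((‖z i - z j‖ : ℝ) : ℂ)) ^ 2 := by
    intro i
    rw [map_prod, ← Finset.prod_mul_distrib]
    refine Finset.prod_congr rfl fun j _ => ?_
    rw [Complex.mul_conj, Complex.normSq_eq_norm_sq, norm_sub_rev]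
    push_cast
    ring
  calc ∏ p ∈ Finset.univ.filter (fun p : Fin n × Fin n => p.1 < p.2),
        (((‖z p.1 - z p.2‖ : ℝ) : ℂ)) ^ 2
      = ∏ p : Fin n × Fin n,
          if p.1 < p.2 then (((‖z p.1 - z p.2‖ : ℝ) : ℂ)) ^ 2 else 1 := by
        rw [Finset.prod_filter]
    _ = ∏ i : Fin n, ∏ j : Fin n,
          if i < j then (((‖z i - z j‖ : ℝ) : ℂ)) ^ 2 else 1 := by
        rw [← Finset.univ_product_univ, Finset.prod_product]
    _ = ∏ i : Fin n, ∏ j ∈ Ioi i, (((‖z i - z j‖ : ℝ) : ℂ)) ^ 2 := by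
        refine Finset.prod_congr rfl fun i _ => ?_
        rw [← Finset.prod_filter, Finset.filter_lt_eq_Ioi]
    _ = ∏ i : Fin n, ((∏ j ∈ Ioi i, (z j - z i))
          * starRingEnd ℂ (∏ j ∈ Ioi i, (z j - z i))) :=
        Finset.prod_congr rfl fun i _ => (hrhs i).symm
    _ = P * ∏ i : Fin n, starRingEnd ℂ (∏ j ∈ Ioi i, (z j - z i)) := Finset.prod_mul_distrib
    _ = _ := by
        rw [hdet, map_mul, map_prod,
          show ε * P * (starRingEnd ℂ ε * ∏ i : Fin n, starRingEnd ℂ (∏ j ∈ Ioi i, (z j - z i)))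
            = (ε * starRingEnd ℂ ε)
              * (P * ∏ i : Fin n, starRingEnd ℂ (∏ j ∈ Ioi i, (z j - z i))) from by ring,
          hsign, one_mul]

/-- Expectation of products of Schur polynomials for an `n`-point rotation-invariant
symmetric polynomial projection (SPP) ensemble, with joint density
`(1/Z_n) ∏_{j<k} |z_j − z_k|²` with respect to `μ^⊗n`. -/
theorem schur_expectation
    (n : ℕ) (hn : 0 < n) (μ : Measure ℂ) [IsProbabilityMeasure μ]
    (hrot : ∀ θ : ℝ, Measure.map (fun z => Complex.exp (θ * Complex.I) * z) μ = μ)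
    (hmom : ∀ k : ℕ, Integrable (fun z => ‖z‖ ^ k) μ)
    (lam pi' : Fin n → ℕ) (hlam : Antitone lam) (hpi : Antitone pi') :
    let M : ℕ → ℝ := fun k => ∫ z, ‖z‖ ^ k ∂μ
    let Z : ℝ := Nat.factorial n * ∏ ℓ ∈ Finset.range n, M (2 * ℓ)
    let s : (Fin n → ℕ) → (Fin n → ℂ) → ℂ := fun ν z =>
      Matrix.det (Matrix.of fun k ℓ : Fin n => z k ^ (ν ℓ + (n - 1 - (ℓ : ℕ)))) /
        Matrix.det (Matrix.of fun k ℓ : Fin n => z k ^ (n - 1 - (ℓ : ℕ)))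
    (1 / (Z : ℂ)) *
        ∫ z : Fin n → ℂ,
          s lam z * starRingEnd ℂ (s pi' z) *
            ∏ p ∈ Finset.univ.filter (fun p : Fin n × Fin n => p.1 < p.2),
              (((‖z p.1 - z p.2‖ : ℝ) : ℂ)) ^ 2
          ∂(Measure.pi fun _ : Fin n => μ)
      = (if lam = pi' then 1 else 0) *
          ∏ ℓ : Fin n,
            ((M (2 * (lam ℓ + (n - 1 - (ℓ : ℕ)))) : ℂ) / (M (2 * (n - 1 - (ℓ : ℕ))) : ℂ)) := by
  intro M Z s
  -- strict antitonicity of staircase exponents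
  have hanti : ∀ l : Fin n → ℕ, Antitone l →
      StrictAnti (fun ℓ : Fin n => l ℓ + (n - 1 - (ℓ : ℕ))) := by
    intro l hl ℓ m hlt
    have h1 : (ℓ : ℕ) < (m : ℕ) := hlt
    have h2 : (m : ℕ) < n := m.isLt
    have h3 := hl (le_of_lt hlt)
    simp only
    omega
  have hinjlam : Function.Injective (fun ℓ : Fin n => lam ℓ + (n - 1 - (ℓ : ℕ))) :=
    (hanti lam hlam).injective
  -- collision lemma
  have hcollide : ∀ σ τ : Equiv.Perm (Fin n),
      (∀ k, lam (σ k) + (n - 1 - ((σ k : Fin n) : ℕ)) = pi' (τ k) + (n - 1 - ((τ k : Fin n) : ℕ)))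
      → lam = pi' ∧ σ = τ := by
    intro σ τ h
    have hab : (fun ℓ : Fin n => lam ℓ + (n - 1 - (ℓ : ℕ)))
        = fun ℓ : Fin n => pi' ℓ + (n - 1 - (ℓ : ℕ)) := by
      refine ((hanti lam hlam).range_inj (hanti pi' hpi)).1 ?_
      have hc : (fun ℓ : Fin n => lam ℓ + (n - 1 - (ℓ : ℕ))) ∘ σ
          = (fun ℓ : Fin n => pi' ℓ + (n - 1 - (ℓ : ℕ))) ∘ τ := funext h
      rw [← σ.surjective.range_comp (fun ℓ : Fin n => lam ℓ + (n - 1 - (ℓ : ℕ))), hc,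
        τ.surjective.range_comp (fun ℓ : Fin n => pi' ℓ + (n - 1 - (ℓ : ℕ)))]
    have hlp : lam = pi' := by
      funext ℓ
      have := congrFun hab ℓ
      omega
    refine ⟨hlp, ?_⟩
    ext k
    have hk := h k
    rw [← hlp] at hk
    rw [hinjlam hk]
  -- moments
  have hmomC : ∀ p q : ℕ, (∫ z, z ^ p * (starRingEnd ℂ z) ^ q ∂μ)
      = if p = q then ((M (2 * p) : ℝ) : ℂ) else 0 := fun p q => mom_eq μ hrot hmom p q
  -- pointwise integrand identity
  have hintegrand : ∀ z : Fin n → ℂ,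
      s lam z * starRingEnd ℂ (s pi' z) *
        ∏ p ∈ Finset.univ.filter (fun p : Fin n × Fin n => p.1 < p.2),
          (((‖z p.1 - z p.2‖ : ℝ) : ℂ)) ^ 2
      = ∑ σ : Equiv.Perm (Fin n), ∑ τ : Equiv.Perm (Fin n),
          (((Equiv.Perm.sign σ : ℤ) : ℂ) * ((Equiv.Perm.sign τ : ℤ) : ℂ))
            * ∏ k : Fin n,
                (z k ^ (lam (σ⁻¹ k) + (n - 1 - ((σ⁻¹ k : Fin n) : ℕ)))
                  * (starRingEnd ℂ (z k)) ^ (pi' (τ⁻¹ k) + (n - 1 - ((τ⁻¹ k : Fin n) : ℕ)))) := by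
    intro z
    have hstep1 : s lam z * starRingEnd ℂ (s pi' z) *
        ∏ p ∈ Finset.univ.filter (fun p : Fin n × Fin n => p.1 < p.2),
          (((‖z p.1 - z p.2‖ : ℝ) : ℂ)) ^ 2
      = Matrix.det (Matrix.of fun k ℓ : Fin n => z k ^ (lam ℓ + (n - 1 - (ℓ : ℕ))))
        * starRingEnd ℂ
          (Matrix.det (Matrix.of fun k ℓ : Fin n => z k ^ (pi' ℓ + (n - 1 - (ℓ : ℕ))))) := by
      rw [prodAbs n z]
      simp only [s]
      by_cases h0 : Matrix.det (Matrix.of fun k ℓ : Fin n => z k ^ (n - 1 - (ℓ : ℕ))) = 0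
      · have hVM : (Matrix.of fun k ℓ : Fin n => z k ^ (n - 1 - (ℓ : ℕ)))
            = (Matrix.vandermonde z).submatrix id (Fin.revPerm : Equiv.Perm (Fin n)) := by
          ext k ℓ
          simp only [Matrix.of_apply, Matrix.submatrix_apply, Matrix.vandermonde_apply, id_eq,
            Fin.revPerm_apply, Fin.val_rev]
          congr 1
          omega
        have hvdm : Matrix.det (Matrix.vandermonde z) = 0 := by
          have := h0
          rw [hVM, Matrix.det_permute'] at this
          rcases mul_eq_zero.mp this with hc | hc
          · exfalso
            rcases Int.units_eq_one_or
              (Equiv.Perm.sign (Fin.revPerm : Equiv.Perm (Fin n))) with hs | hs <;>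
              rw [hs] at hc <;> simp at hc
          · exact hc
        obtain ⟨i, j, hij, hne⟩ := Matrix.det_vandermonde_eq_zero_iff.mp hvdm
        have hA : Matrix.det
            (Matrix.of fun k ℓ : Fin n => z k ^ (lam ℓ + (n - 1 - (ℓ : ℕ)))) = 0 :=
          Matrix.det_zero_of_row_eq hne (funext fun ℓ => by simp [hij])
        rw [h0, hA]
        simp
      · have h0c : starRingEnd ℂ
            (Matrix.det (Matrix.of fun k ℓ : Fin n => z k ^ (n - 1 - (ℓ : ℕ)))) ≠ 0 :=
          fun hc => h0 (by rw [← Complex.conj_conj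
            (Matrix.det (Matrix.of fun k ℓ : Fin n => z k ^ (n - 1 - (ℓ : ℕ)))), hc, map_zero])
        rw [map_div₀]
        field_simp
    have hB : starRingEnd ℂ
        (Matrix.det (Matrix.of fun k ℓ : Fin n => z k ^ (pi' ℓ + (n - 1 - (ℓ : ℕ)))))
        = ∑ τ : Equiv.Perm (Fin n), ((Equiv.Perm.sign τ : ℤ) : ℂ)
            * ∏ ℓ : Fin n, (starRingEnd ℂ (z (τ ℓ))) ^ (pi' ℓ + (n - 1 - (ℓ : ℕ))) := by
      rw [Matrix.det_apply', map_sum]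
      refine Finset.sum_congr rfl fun τ _ => ?_
      rw [map_mul, map_prod]
      simp [map_pow]
    rw [hstep1, hB, Matrix.det_apply', Finset.sum_mul_sum]
    refine Finset.sum_congr rfl fun σ _ => Finset.sum_congr rfl fun τ _ => ?_
    simp only [Matrix.of_apply]
    have e1 : ∏ ℓ : Fin n, z (σ ℓ) ^ (lam ℓ + (n - 1 - (ℓ : ℕ)))
        = ∏ k : Fin n, z k ^ (lam (σ⁻¹ k) + (n - 1 - ((σ⁻¹ k : Fin n) : ℕ))) := by
      rw [← Equiv.prod_comp σ
        (fun k => z k ^ (lam (σ⁻¹ k) + (n - 1 - ((σ⁻¹ k : Fin n) : ℕ))))]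
      simp
    have e2 : ∏ ℓ : Fin n, (starRingEnd ℂ (z (τ ℓ))) ^ (pi' ℓ + (n - 1 - (ℓ : ℕ)))
        = ∏ k : Fin n,
            (starRingEnd ℂ (z k)) ^ (pi' (τ⁻¹ k) + (n - 1 - ((τ⁻¹ k : Fin n) : ℕ))) := by
      rw [← Equiv.prod_comp τ
        (fun k => (starRingEnd ℂ (z k)) ^ (pi' (τ⁻¹ k) + (n - 1 - ((τ⁻¹ k : Fin n) : ℕ))))]
      simp
    rw [e1, e2, Finset.prod_mul_distrib]
    ring
  -- compute the integral
  have hI : (∫ z : Fin n → ℂ,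
        s lam z * starRingEnd ℂ (s pi' z) *
          ∏ p ∈ Finset.univ.filter (fun p : Fin n × Fin n => p.1 < p.2),
            (((‖z p.1 - z p.2‖ : ℝ) : ℂ)) ^ 2
        ∂(Measure.pi fun _ : Fin n => μ))
      = ∑ σ : Equiv.Perm (Fin n), ∑ τ : Equiv.Perm (Fin n),
          (((Equiv.Perm.sign σ : ℤ) : ℂ) * ((Equiv.Perm.sign τ : ℤ) : ℂ))
            * ∏ k : Fin n,
                (if lam (σ⁻¹ k) + (n - 1 - ((σ⁻¹ k : Fin n) : ℕ))
                    = pi' (τ⁻¹ k) + (n - 1 - ((τ⁻¹ k : Fin n) : ℕ))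
                  then ((M (2 * (lam (σ⁻¹ k) + (n - 1 - ((σ⁻¹ k : Fin n) : ℕ)))) : ℝ) : ℂ)
                  else 0) := by
    have hFint : ∀ σ τ : Equiv.Perm (Fin n), Integrable (fun z : Fin n → ℂ =>
        ∏ k : Fin n, (z k ^ (lam (σ⁻¹ k) + (n - 1 - ((σ⁻¹ k : Fin n) : ℕ)))
          * (starRingEnd ℂ (z k)) ^ (pi' (τ⁻¹ k) + (n - 1 - ((τ⁻¹ k : Fin n) : ℕ)))))
        (Measure.pi fun _ : Fin n => μ) := fun σ τ =>
      prod_integrable n μ _ (fun k => intPQ μ hmom _ _)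
    simp only [hintegrand]
    rw [integral_finset_sum _ fun σ _ =>
      integrable_finset_sum _ fun τ _ => ((hFint σ τ).const_mul _)]
    refine Finset.sum_congr rfl fun σ _ => ?_
    rw [integral_finset_sum _ fun τ _ => ((hFint σ τ).const_mul _)]
    refine Finset.sum_congr rfl fun τ _ => ?_
    rw [integral_const_mul]
    congr 1
    rw [prod_integral n μ
      (fun k w => w ^ (lam (σ⁻¹ k) + (n - 1 - ((σ⁻¹ k : Fin n) : ℕ)))
        * (starRingEnd ℂ w) ^ (pi' (τ⁻¹ k) + (n - 1 - ((τ⁻¹ k : Fin n) : ℕ))))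
      (fun k => intPQ μ hmom _ _)]
    exact Finset.prod_congr rfl fun k _ => hmomC _ _
  rw [hI]
  by_cases hLP : lam = pi'
  · subst hLP
    rw [if_pos rfl]
    have h1 : ∀ σ : Equiv.Perm (Fin n),
        ((Equiv.Perm.sign σ : ℤ) : ℂ) * ((Equiv.Perm.sign σ : ℤ) : ℂ) = 1 := by
      intro σ
      rcases Int.units_eq_one_or (Equiv.Perm.sign σ) with hs | hs <;> simp [hs]
    have hdiagval : ∀ σ : Equiv.Perm (Fin n),
        (∑ τ : Equiv.Perm (Fin n),
          (((Equiv.Perm.sign σ : ℤ) : ℂ) * ((Equiv.Perm.sign τ : ℤ) : ℂ))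
            * ∏ k : Fin n,
                (if lam (σ⁻¹ k) + (n - 1 - ((σ⁻¹ k : Fin n) : ℕ))
                    = lam (τ⁻¹ k) + (n - 1 - ((τ⁻¹ k : Fin n) : ℕ))
                  then ((M (2 * (lam (σ⁻¹ k) + (n - 1 - ((σ⁻¹ k : Fin n) : ℕ)))) : ℝ) : ℂ)
                  else 0))
        = ∏ ℓ : Fin n, ((M (2 * (lam ℓ + (n - 1 - (ℓ : ℕ)))) : ℝ) : ℂ) := by
      intro σ
      rw [Finset.sum_eq_single σ]
      · rw [show (∏ k : Fin n,
            (if lam (σ⁻¹ k) + (n - 1 - ((σ⁻¹ k : Fin n) : ℕ))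
                = lam (σ⁻¹ k) + (n - 1 - ((σ⁻¹ k : Fin n) : ℕ))
              then ((M (2 * (lam (σ⁻¹ k) + (n - 1 - ((σ⁻¹ k : Fin n) : ℕ)))) : ℝ) : ℂ)
              else 0))
            = ∏ k : Fin n, ((M (2 * (lam (σ⁻¹ k) + (n - 1 - ((σ⁻¹ k : Fin n) : ℕ)))) : ℝ) : ℂ)
          from Finset.prod_congr rfl fun k _ => if_pos rfl, h1, one_mul]
        exact Equiv.prod_comp σ⁻¹ (fun ℓ => ((M (2 * (lam ℓ + (n - 1 - (ℓ : ℕ)))) : ℝ) : ℂ))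
      · intro τ _ hτ
        obtain ⟨k, hk⟩ : ∃ k : Fin n, σ⁻¹ k ≠ τ⁻¹ k := by
          by_contra hall
          push_neg at hall
          exact hτ (by
            have : σ⁻¹ = τ⁻¹ := Equiv.ext hall
            rw [← inv_inv τ, ← this, inv_inv])
        refine mul_eq_zero_of_right _ (Finset.prod_eq_zero (Finset.mem_univ k) ?_)
        exact if_neg fun hh => hk (hinjlam hh)
      · intro hσ
        exact absurd (Finset.mem_univ σ) hσ
    rw [Finset.sum_congr rfl fun σ _ => hdiagval σ, Finset.sum_const, Finset.card_univ,
      Fintype.card_perm, Fintype.card_fin, nsmul_eq_mul]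
    have hZc : (Z : ℂ) = ((n.factorial : ℕ) : ℂ)
        * ∏ ℓ : Fin n, ((M (2 * (n - 1 - (ℓ : ℕ))) : ℝ) : ℂ) := by
      have hZprod : (∏ ℓ ∈ Finset.range n, M (2 * ℓ))
          = ∏ ℓ : Fin n, M (2 * (n - 1 - (ℓ : ℕ))) := by
        rw [← Fin.prod_univ_eq_prod_range (fun j => M (2 * j)) n]
        exact (Fintype.prod_equiv (Fin.revPerm : Equiv.Perm (Fin n)) _ _ (fun ℓ => by
          simp only [Fin.revPerm_apply, Fin.val_rev]
          congr 2
          omega)).symm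
      simp only [Z, hZprod]
      push_cast
      ring
    have hfact : ((n.factorial : ℕ) : ℂ) ≠ 0 := Nat.cast_ne_zero.mpr n.factorial_ne_zero
    rw [hZc, one_mul, Finset.prod_div_distrib, one_div_mul_eq_div,
      mul_div_mul_left _ _ hfact]
  · rw [if_neg hLP]
    rw [Finset.sum_eq_zero fun σ _ => Finset.sum_eq_zero fun τ _ => ?_]
    · simp
    obtain ⟨k, hk⟩ : ∃ k : Fin n,
        lam (σ⁻¹ k) + (n - 1 - ((σ⁻¹ k : Fin n) : ℕ))
          ≠ pi' (τ⁻¹ k) + (n - 1 - ((τ⁻¹ k : Fin n) : ℕ)) := by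
      by_contra hall
      push_neg at hall
      exact hLP (hcollide σ⁻¹ τ⁻¹ hall).1
    exact mul_eq_zero_of_right _ (Finset.prod_eq_zero (Finset.mem_univ k) (if_neg hk))
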